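/- Let A and Ã be positive semidefinite n×n real matrices and let ε ∈ (0,1). If Ã ≈_ε A (i.e., e^{-ε}·xᵀAx ≤ xᵀÃx ≤ e^{ε}·xᵀAx for all x ∈ ℝⁿ), then the Hadamard squares satisfy Ã^{∘2} ≈_{2ε} A^{∘2}, i.e., e^{-2ε}·xᵀ(A∘A)x ≤ xᵀ(Ã∘Ã)x ≤ e^{2ε}·xᵀ(A∘A)x for all x ∈ ℝⁿ. -/

import Mathlib

open Matrix

lemma hadquad {n : ℕ} (A B : Matrix (Fin n) (Fin n) ℝ) (hA : A.PosSemidef)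
    (hB : B.PosSemidef) (x : Fin n → ℝ) : 0 ≤ x ⬝ᵥ (A ⊙ B).mulVec x := by
  obtain ⟨C, rfl⟩ : ∃ C : Matrix (Fin n) (Fin n) ℝ, A = Cᴴ * C := by
    open scoped MatrixOrder in
    obtain ⟨X, hX, -, hXA⟩ := CFC.exists_sqrt_of_isSelfAdjoint_of_quasispectrumRestricts
      hA.isHermitian (QuasispectrumRestricts.nnreal_of_nonneg hA.nonneg)
    exact ⟨X, by rw [← hXA, ← star_eq_conjTranspose, hX.star_eq]⟩
  have key : x ⬝ᵥ ((Cᴴ * C) ⊙ B).mulVec x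
      = ∑ i, (fun k => C i k * x k) ⬝ᵥ B.mulVec (fun k => C i k * x k) := by
    simp only [dotProduct, mulVec, hadamard_apply, Matrix.mul_apply, conjTranspose_apply,
      star_trivial, Finset.mul_sum, Finset.sum_mul]
    refine (Finset.sum_congr rfl fun a _ => Finset.sum_comm).trans ?_
    rw [Finset.sum_comm]
    exact Finset.sum_congr rfl fun i _ => Finset.sum_congr rfl fun k _ =>
      Finset.sum_congr rfl fun l _ => by ring
  rw [key]
  exact Finset.sum_nonneg fun i _ => by simpa using hB.dotProduct_mulVec_nonneg (fun k => C i k * x k)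

lemma smulPSD {n : ℕ} (A : Matrix (Fin n) (Fin n) ℝ) (c : ℝ) (hc : 0 ≤ c)
    (hA : A.PosSemidef) : (c • A).PosSemidef := by
  refine PosSemidef.of_dotProduct_mulVec_nonneg ?_ (fun y => ?_)
  · rw [Matrix.IsHermitian, conjTranspose_smul, star_trivial, hA.1]
  · have := hA.dotProduct_mulVec_nonneg y
    simp only [smul_mulVec, dotProduct_smul, smul_eq_mul] at *
    exact mul_nonneg hc this

theorem stmt_0 {n : ℕ} (A At : Matrix (Fin n) (Fin n) ℝ) (ε : ℝ)
    (hA : A.PosSemidef) (hAt : At.PosSemidef) (hε : ε ∈ Set.Ioo (0:ℝ) 1)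
    (happrox : ∀ x : Fin n → ℝ,
      Real.exp (-ε) * (x ⬝ᵥ A.mulVec x) ≤ x ⬝ᵥ At.mulVec x ∧
      x ⬝ᵥ At.mulVec x ≤ Real.exp ε * (x ⬝ᵥ A.mulVec x)) :
    ∀ x : Fin n → ℝ,
      Real.exp (-(2*ε)) * (x ⬝ᵥ (A ⊙ A).mulVec x) ≤ x ⬝ᵥ (At ⊙ At).mulVec x ∧
      x ⬝ᵥ (At ⊙ At).mulVec x ≤ Real.exp (2*ε) * (x ⬝ᵥ (A ⊙ A).mulVec x) := by
  intro x
  set c := Real.exp ε with hc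
  set d := Real.exp (-ε) with hd
  have hcA : (c • A).PosSemidef := smulPSD A c (Real.exp_pos ε).le hA
  have hdA : (d • A).PosSemidef := smulPSD A d (Real.exp_pos (-ε)).le hA
  have hP : (c • A - At).PosSemidef := by
    refine PosSemidef.of_dotProduct_mulVec_nonneg (hcA.1.sub hAt.1) fun y => ?_
    have := (happrox y).2
    simp only [star_trivial, sub_mulVec, smul_mulVec, dotProduct_sub,
      dotProduct_smul, smul_eq_mul]
    linarith
  have hQ : (At - d • A).PosSemidef := by
    refine PosSemidef.of_dotProduct_mulVec_nonneg (hAt.1.sub hdA.1) fun y => ?_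
    have := (happrox y).1
    simp only [star_trivial, sub_mulVec, smul_mulVec, dotProduct_sub,
      dotProduct_smul, smul_eq_mul]
    linarith
  have exp2 : Real.exp (2 * ε) = c * c := by
    rw [two_mul, Real.exp_add]
  have exp2' : Real.exp (-(2 * ε)) = d * d := by
    rw [hd, ← Real.exp_add]; ring_nf
  constructor
  · -- lower bound
    have h1 := hadquad _ _ hQ hdA x
    have h2 := hadquad _ _ hAt hQ x
    have idL : (At - d • A) ⊙ (d • A) + At ⊙ (At - d • A)
        = At ⊙ At - (d * d) • (A ⊙ A) := by
      ext i j
      simp only [hadamard_apply, Matrix.add_apply, Matrix.sub_apply, Matrix.smul_apply,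
        smul_eq_mul]
      ring
    have hsum : 0 ≤ x ⬝ᵥ ((At - d • A) ⊙ (d • A) + At ⊙ (At - d • A)).mulVec x := by
      rw [add_mulVec, dotProduct_add]; exact add_nonneg h1 h2
    rw [idL, sub_mulVec, dotProduct_sub, smul_mulVec, dotProduct_smul,
      smul_eq_mul] at hsum
    rw [exp2']
    linarith
  · -- upper bound
    have h1 := hadquad _ _ hP hcA x
    have h2 := hadquad _ _ hAt hP x
    have idU : (c • A - At) ⊙ (c • A) + At ⊙ (c • A - At)
        = (c * c) • (A ⊙ A) - At ⊙ At := by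
      ext i j
      simp only [hadamard_apply, Matrix.add_apply, Matrix.sub_apply, Matrix.smul_apply,
        smul_eq_mul]
      ring
    have hsum : 0 ≤ x ⬝ᵥ ((c • A - At) ⊙ (c • A) + At ⊙ (c • A - At)).mulVec x := by
      rw [add_mulVec, dotProduct_add]; exact add_nonneg h1 h2
    rw [idU, sub_mulVec, dotProduct_sub, smul_mulVec, dotProduct_smul,
      smul_eq_mul] at hsum
    rw [exp2]
    linarith
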